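/- Let (T,d) be a compact ℝ-tree rooted at ρ, W the tree-indexed Gaussian process with Cov(W_σ, W_{σ'}) = d(ρ, σ∧σ'), and suppose σ_0 ∈ T has infinite branching degree: for every r > 0 there exist infinitely many points at distance r from σ_0 lying in pairwise distinct connected components of T \ {σ_0}. Then for every r > 0 and every n, choosing n such points σ_1, ..., σ_n, one has Var(W_{σ_0} | W_{σ_1}, ..., W_{σ_n}) ≤ r/n; in particular the conditional variance given all such points at distance r is 0, so W is not strongly locally nondeterministic. -/

import Mathlib

open MeasureTheory

/-- An `ℝ`-tree: a geodesic metric space satisfying the four-point (0-hyperbolicity)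
condition. -/
def IsRTree (T : Type*) [MetricSpace T] : Prop :=
  (∀ x y : T, ∃ f : ℝ → T, f 0 = x ∧ f (dist x y) = y ∧
    ∀ s ∈ Set.Icc (0 : ℝ) (dist x y), ∀ t ∈ Set.Icc (0 : ℝ) (dist x y),
      dist (f s) (f t) = |s - t|) ∧
  (∀ x y z w : T, dist x y + dist z w ≤ max (dist x z + dist y w) (dist x w + dist y z))


section Aux

variable {Ω : Type*} [MeasurableSpace Ω] {P : Measure Ω}

theorem aux_mul_int {f g : Ω → ℝ} (hf : MemLp f 2 P) (hg : MemLp g 2 P) :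
    Integrable (fun ω => f ω * g ω) P := by
  have h : MemLp (f • g) 1 P := hg.smul hf (hpqr := ⟨by simp [one_div, ENNReal.inv_two_add_inv_two]⟩)
  rw [memLp_one_iff_integrable] at h
  exact h

theorem aux_expand {m : ℕ} (g : Ω → ℝ) (h : Fin m → Ω → ℝ)
    (hg : MemLp g 2 P) (hh : ∀ i, MemLp (h i) 2 P) :
    ∫ ω, (g ω - ∑ i, h i ω) ^ 2 ∂P
      = (∫ ω, g ω * g ω ∂P) - 2 * ∑ i, ∫ ω, g ω * h i ω ∂P
        + ∑ i, ∑ j, ∫ ω, h i ω * h j ω ∂P := by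
  have key : ∀ ω, (g ω - ∑ i, h i ω) ^ 2
      = g ω * g ω - 2 * ∑ i, g ω * h i ω + ∑ i, ∑ j, h i ω * h j ω := by
    intro ω
    rw [← Finset.mul_sum, ← Finset.sum_mul_sum]
    ring
  simp_rw [key]
  have igg : Integrable (fun ω => g ω * g ω) P := aux_mul_int hg hg
  have igh : ∀ i, Integrable (fun ω => g ω * h i ω) P := fun i => aux_mul_int hg (hh i)
  have ihh : ∀ i j, Integrable (fun ω => h i ω * h j ω) P := fun i j => aux_mul_int (hh i) (hh j)
  have i1 : Integrable (fun ω => 2 * ∑ i, g ω * h i ω) P :=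
    (integrable_finset_sum _ fun i _ => igh i).const_mul 2
  have i2 : Integrable (fun ω => ∑ i, ∑ j, h i ω * h j ω) P :=
    integrable_finset_sum _ fun i _ => integrable_finset_sum _ fun j _ => ihh i j
  have i0 : Integrable (fun ω => g ω * g ω - 2 * ∑ i, g ω * h i ω) P := igg.sub i1
  rw [integral_add i0 i2, integral_sub igg i1, integral_const_mul,
    integral_finset_sum _ fun i _ => igh i]
  congr 1
  rw [integral_finset_sum _ fun i _ => integrable_finset_sum _ fun j _ => ihh i j]
  exact Finset.sum_congr rfl fun i _ => integral_finset_sum _ fun j _ => ihh i j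

end Aux

theorem stmt6' {T : Type*} [MetricSpace T] (ρ : T)
    {Ω : Type*} [MeasurableSpace Ω] (P : Measure Ω) [IsProbabilityMeasure P]
    (W : T → Ω → ℝ) (hmeas : ∀ σ, Measurable (W σ))
    (hcov : ∀ σ σ', ∫ ω, W σ ω * W σ' ω ∂P =
      (dist ρ σ + dist ρ σ' - dist σ σ') / 2)
    (r : ℝ) (hr : 0 < r) (n : ℕ) (hn : 1 ≤ n)
    (σ0 : T) (σs : Fin n → T)
    (hdist : ∀ i, dist σ0 (σs i) = r)
    (hsep : ∀ i j, i ≠ j →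
      dist (σs i) (σs j) = dist (σs i) σ0 + dist σ0 (σs j)) :
    (⨅ a : Fin n → ℝ, ∫ ω, (W σ0 ω - ∑ i, a i * W (σs i) ω) ^ 2 ∂P) ≤ r / n := by
  classical
  have hN : (n : ℝ) ≠ 0 := Nat.cast_ne_zero.mpr (by omega)
  have hNpos : (0:ℝ) < n := by positivity
  have hbdd : BddBelow (Set.range fun a : Fin n → ℝ =>
      ∫ ω, (W σ0 ω - ∑ i, a i * W (σs i) ω) ^ 2 ∂P) := by
    refine ⟨0, ?_⟩
    rintro x ⟨a, rfl⟩
    exact integral_nonneg fun ω => sq_nonneg _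
  by_cases h0 : σ0 = ρ
  · refine le_trans (ciInf_le hbdd fun _ => 0) ?_
    have hz : ∫ ω, (W σ0 ω - ∑ i : Fin n, (0:ℝ) * W (σs i) ω) ^ 2 ∂P = 0 := by
      have h := hcov σ0 σ0
      rw [dist_self, show dist ρ σ0 = 0 from by rw [h0, dist_self]] at h
      simp only [zero_mul, Finset.sum_const_zero, sub_zero, sq]
      rw [h]
      ring
    rw [hz]
    positivity
  · set a : Fin n → ℝ := fun i => if σs i = ρ then 0 else 1/n with ha
    refine le_trans (ciInf_le hbdd a) ?_
    have hL2 : ∀ σ : T, dist ρ σ ≠ 0 → MemLp (W σ) 2 P := by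
      intro σ hσ
      rw [memLp_two_iff_integrable_sq (hmeas σ).aestronglyMeasurable]
      by_contra hni
      have hni' : ¬ Integrable (fun ω => W σ ω * W σ ω) P := by
        simpa [sq] using hni
      have h := hcov σ σ
      rw [dist_self, integral_undef hni'] at h
      apply hσ
      linarith
    have hg : MemLp (W σ0) 2 P := by
      refine hL2 σ0 fun h => h0 ?_
      rw [dist_eq_zero] at h
      exact h.symm
    have hh : ∀ i, MemLp (fun ω => a i * W (σs i) ω) 2 P := by
      intro i
      by_cases hi : σs i = ρ
      · simp only [ha, if_pos hi, zero_mul]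
        exact memLp_const 0
      · have hL : MemLp (W (σs i)) 2 P := by
          refine hL2 _ fun h => hi ?_
          rw [dist_eq_zero] at h
          exact h.symm
        exact hL.const_mul (a i)
    have E := aux_expand (P := P) (W σ0) (fun i ω => a i * W (σs i) ω) hg hh
    rw [E]
    have e0 : ∫ ω, W σ0 ω * W σ0 ω ∂P = dist ρ σ0 := by
      rw [hcov, dist_self]
      ring
    have e1 : ∀ i, ∫ ω, W σ0 ω * (a i * W (σs i) ω) ∂P
        = (1/(n:ℝ)) * ((dist ρ σ0 + dist ρ (σs i) - r)/2) := by
      intro i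
      have hpull : ∫ ω, W σ0 ω * (a i * W (σs i) ω) ∂P
          = a i * ∫ ω, W σ0 ω * W (σs i) ω ∂P := by
        rw [← integral_const_mul]
        congr 1
        funext ω
        ring
      rw [hpull, hcov σ0 (σs i), hdist i]
      by_cases hi : σs i = ρ
      · have hc : dist ρ (σs i) = 0 := by rw [hi, dist_self]
        have hd0 : dist ρ σ0 = r := by rw [← hi, dist_comm, hdist i]
        simp [ha, hi, hc, hd0]
      · simp [ha, hi]
    have e2 : ∀ i j, ∫ ω, (a i * W (σs i) ω) * (a j * W (σs j) ω) ∂P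
        = (1/(n:ℝ)) * (1/(n:ℝ)) *
          ((dist ρ (σs i) + dist ρ (σs j))/2 - if i = j then 0 else r) := by
      intro i j
      have hpull : ∫ ω, (a i * W (σs i) ω) * (a j * W (σs j) ω) ∂P
          = (a i * a j) * ∫ ω, W (σs i) ω * W (σs j) ω ∂P := by
        rw [← integral_const_mul]
        congr 1
        funext ω
        ring
      rw [hpull, hcov (σs i) (σs j)]
      by_cases hij : i = j
      · subst hij
        rw [dist_self, if_pos rfl]
        by_cases hi : σs i = ρ
        · have hc : dist ρ (σs i) = 0 := by rw [hi, dist_self]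
          simp [ha, hi, hc]
        · simp only [ha, if_neg hi]
          ring
      · have hD : dist (σs i) (σs j) = 2 * r := by
          rw [hsep i j hij, dist_comm (σs i) σ0, hdist i, hdist j]
          ring
        rw [hD, if_neg hij]
        by_cases hi : σs i = ρ
        · have hc : dist ρ (σs i) = 0 := by rw [hi, dist_self]
          have hcj : dist ρ (σs j) = 2 * r := by rw [← hi, hD]
          simp only [ha, if_pos hi, hc, hcj]
          ring
        · by_cases hj : σs j = ρ
          · have hc : dist ρ (σs j) = 0 := by rw [hj, dist_self]
            have hci : dist ρ (σs i) = 2 * r := by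
              rw [← hj, dist_comm, hD]
            simp only [ha, if_pos hj, if_neg hi, hc, hci]
            ring
          · simp only [ha, if_neg hi, if_neg hj]
            ring
    simp only [e0, e1, e2]
    set d0 := dist ρ σ0 with hd0
    set c : Fin n → ℝ := fun i => dist ρ (σs i) with hc
    set Sc := ∑ i, c i with hSc
    have A : ∑ i : Fin n, (1/(n:ℝ)) * ((d0 + c i - r)/2)
        = (1/(n:ℝ)) * (((n:ℝ) * (d0 - r) + Sc)/2) := by
      rw [← Finset.mul_sum]
      congr 1
      rw [Finset.sum_congr rfl fun i _ => show (d0 + c i - r)/2 = (d0 - r)/2 + c i/2 by ring,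
        Finset.sum_add_distrib, Finset.sum_const, Finset.card_univ, Fintype.card_fin,
        nsmul_eq_mul, ← Finset.sum_div]
      rw [hSc]
      ring
    have hinner : ∀ i : Fin n, ∑ j : Fin n, ((c i + c j)/2 - if i = j then (0:ℝ) else r)
        = ((n:ℝ) * c i + Sc)/2 - ((n:ℝ) * r - r) := by
      intro i
      rw [Finset.sum_sub_distrib]
      congr 1
      · rw [← Finset.sum_div]
        congr 1
        rw [Finset.sum_add_distrib, Finset.sum_const, Finset.card_univ, Fintype.card_fin,
          nsmul_eq_mul, hSc]
      · have hsw : ∀ j : Fin n, (if i = j then (0:ℝ) else r) = r - (if i = j then r else 0) := by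
          intro j
          by_cases h : i = j <;> simp [h]
        simp_rw [hsw]
        rw [Finset.sum_sub_distrib, Finset.sum_const, Finset.card_univ, Fintype.card_fin,
          nsmul_eq_mul, Finset.sum_ite_eq, if_pos (Finset.mem_univ i)]
    have B : ∑ i : Fin n, ∑ j : Fin n, (1/(n:ℝ)) * (1/(n:ℝ)) *
        ((c i + c j)/2 - if i = j then (0:ℝ) else r)
        = (1/(n:ℝ)) * (1/(n:ℝ)) *
          (((n:ℝ) * Sc + (n:ℝ) * Sc)/2 - (n:ℝ) * ((n:ℝ) * r - r)) := by
      simp_rw [← Finset.mul_sum]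
      congr 1
      simp_rw [hinner]
      rw [Finset.sum_sub_distrib, Finset.sum_const, Finset.card_univ, Fintype.card_fin,
        nsmul_eq_mul, ← Finset.sum_div, Finset.sum_add_distrib, ← Finset.mul_sum,
        Finset.sum_const, Finset.card_univ, Fintype.card_fin, nsmul_eq_mul, hSc]
    rw [A, B]
    have : d0 - 2 * ((1/(n:ℝ)) * (((n:ℝ) * (d0 - r) + Sc)/2))
        + (1/(n:ℝ)) * (1/(n:ℝ)) * (((n:ℝ) * Sc + (n:ℝ) * Sc)/2 - (n:ℝ) * ((n:ℝ) * r - r))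
        = r / n := by
      field_simp
      ring
    rw [this]

/-- Failure of strong local nondeterminism at an infinite-branching vertex: if
`σ_1, …, σ_n` lie at distance exactly `r` from `σ_0` in pairwise distinct components of
`T \ {σ_0}` (so that `d(σ_i, σ_j) = d(σ_i, σ_0) + d(σ_0, σ_j) = 2r` for `i ≠ j`), then
the conditional variance of `W_{σ_0}` given `W_{σ_1}, …, W_{σ_n}`, i.e. the infimum over
`a ∈ ℝ^n` of `Var(W_{σ_0} - Σ a_i W_{σ_i})`, is at most `r / n`. -/
theorem stmt6 {T : Type*} [MetricSpace T] [CompactSpace T] (htree : IsRTree T) (ρ : T)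
    {Ω : Type*} [MeasurableSpace Ω] (P : Measure Ω) [IsProbabilityMeasure P]
    (W : T → Ω → ℝ) (hmeas : ∀ σ, Measurable (W σ))
    (hmean : ∀ σ, ∫ ω, W σ ω ∂P = 0)
    (hcov : ∀ σ σ', ∫ ω, W σ ω * W σ' ω ∂P =
      (dist ρ σ + dist ρ σ' - dist σ σ') / 2)
    (r : ℝ) (hr : 0 < r) (n : ℕ) (hn : 1 ≤ n)
    (σ0 : T) (σs : Fin n → T)
    (hdist : ∀ i, dist σ0 (σs i) = r)
    (hsep : ∀ i j, i ≠ j →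
      dist (σs i) (σs j) = dist (σs i) σ0 + dist σ0 (σs j)) :
    (⨅ a : Fin n → ℝ, ∫ ω, (W σ0 ω - ∑ i, a i * W (σs i) ω) ^ 2 ∂P) ≤ r / n := by
  exact stmt6' ρ P W hmeas hcov r hr n hn σ0 σs hdist hsep
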